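/- Let G be a finite non-nilpotent group. Then the intersection of all non-normal maximal subgroups of G is nilpotent. -/

import Mathlib

open Subgroup

theorem stmt10 {G : Type*} [Group G] [Fintype G] (hG : ¬ Group.IsNilpotent G) :
    Group.IsNilpotent
      ↥(sInf {M : Subgroup G | IsCoatom M ∧ ¬ M.Normal}) := by
  classical
  set S : Set (Subgroup G) := {M : Subgroup G | IsCoatom M ∧ ¬ M.Normal} with hS
  set L : Subgroup G := sInf S with hLdef
  -- conjugates of members of S are in S
  have hSconj : ∀ (g : G), ∀ M ∈ S,
      Subgroup.comap ((MulAut.conj g : G ≃* G) : G →* G) M ∈ S := by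
    intro g M hM
    refine ⟨(Subgroup.isCoatom_comap (MulAut.conj g)).mpr hM.1, fun hn => hM.2 ?_⟩
    have hmap : Subgroup.map ((MulAut.conj g : G ≃* G) : G →* G)
        (Subgroup.comap ((MulAut.conj g : G ≃* G) : G →* G) M) = M :=
      Subgroup.map_comap_eq_self_of_surjective (MulAut.conj g).surjective M
    exact hmap ▸ hn.map _ (MulAut.conj g).surjective
  haveI hLn : L.Normal := by
    constructor
    intro n hn g
    rw [hLdef, Subgroup.mem_sInf] at hn ⊢
    intro M hM
    have := hn _ (hSconj g M hM)
    simpa using this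
  refine ((isNilpotent_of_finite_tfae (G := ↥L)).out 3 0).mp ?_
  intro p hp P
  set Q : Subgroup G := (P : Subgroup L).map L.subtype with hQdef
  have hQL : Q ≤ L := map_subtype_le _
  have hPQ : Q.subgroupOf L = (P : Subgroup L) :=
    Subgroup.comap_map_eq_self_of_injective L.subtype_injective _
  have hQp : IsPGroup p Q := P.isPGroup'.map _
  have hQtop : normalizer (Q : Set G) = ⊤ := by
    by_contra hne
    obtain ⟨M, hM, hQM⟩ := (eq_top_or_exists_le_coatom (normalizer (Q : Set G))).resolve_left hne
    have hQM' : Q ≤ M := le_trans Subgroup.le_normalizer hQM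
    by_cases hMn : M.Normal
    · -- K := L ⊓ M, Frattini with K
      set K : Subgroup G := L ⊓ M with hKdef
      haveI : K.Normal := Subgroup.normal_inf_normal L M
      have hKL : K ≤ L := inf_le_left
      have hKM : K ≤ M := inf_le_right
      have hQK : Q ≤ K := le_inf hQL hQM'
      have hQKp : IsPGroup p (Q.subgroupOf K) :=
        hQp.comap_of_injective K.subtype K.subtype_injective
      obtain ⟨R, hR⟩ := hQKp.exists_le_sylow
      have hRL : (R : Subgroup K).map K.subtype ≤ L :=
        le_trans (map_subtype_le _) hKL
      have hQR : Q ≤ (R : Subgroup K).map K.subtype := by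
        have := Subgroup.map_mono (f := K.subtype) hR
        rwa [subgroupOf_map_subtype, inf_of_le_left hQK] at this
      have hT : ((R : Subgroup K).map K.subtype).subgroupOf L = (P : Subgroup L) := by
        apply P.is_maximal'
        · exact (R.isPGroup'.map _).comap_of_injective L.subtype L.subtype_injective
        · rw [← hPQ]; exact Subgroup.comap_mono hQR
      have hRQ : (R : Subgroup K).map K.subtype = Q := by
        have := congrArg (Subgroup.map L.subtype) hT
        rwa [subgroupOf_map_subtype, inf_of_le_left hRL] at this
      have frattini := Sylow.normalizer_sup_eq_top (N := K) R
      have : normalizer (((R : Subgroup K).map K.subtype : Subgroup G) : Set G) ⊔ K ≤ M := by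
        rw [hRQ]; exact sup_le hQM hKM
      rw [frattini] at this
      exact hM.1 (top_le_iff.mp this)
    · -- M is a non-normal maximal subgroup, so L ≤ M
      have hLM : L ≤ M := sInf_le ⟨hM, hMn⟩
      have frattini := Sylow.normalizer_sup_eq_top (N := L) P
      have : normalizer (((P : Subgroup L).map L.subtype : Subgroup G) : Set G) ⊔ L ≤ M := sup_le hQM hLM
      rw [frattini] at this
      exact hM.1 (top_le_iff.mp this)
  have hQn : Q.Normal := Subgroup.normalizer_eq_top_iff.mp hQtop
  exact hPQ ▸ hQn.subgroupOf L
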